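/- Let (W,S) be an even Coxeter system, t ∈ S, U = {s ∈ S : m_{st} < ∞}, and suppose for all distinct s,s' ∈ U with m_{st} > 2 and m_{s't} > 2 we have m_{ss'} = ∞ or s = s'. Fix s ∈ U with m_{st} > 2 and let u ∈ W_{{s,t}} have the reduced expression t s t ⋯ s t (an alternating word of odd length beginning and ending with t, of length < m_{st}). Then u is (U∖{t}, U∖{t})-reduced: for every r ∈ U ∖ {t}, both ℓ(ru) > ℓ(u) and ℓ(ur) > ℓ(u). -/

import Mathlib

open CoxeterSystem List

/-- A Coxeter matrix is *even* if every off-diagonal entry is even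
(the entry `0`, denoting `∞`, counts as even, i.e. is also allowed). -/
def CoxeterMatrix.IsEven {B : Type*} (M : CoxeterMatrix B) : Prop :=
  ∀ i i' : B, i ≠ i' → Even (M i i')

/-- The standard parabolic subgroup `W_T` generated by the simple reflections in `T`. -/
def CoxeterSystem.parabolic {B W : Type*} [Group W] {M : CoxeterMatrix B}
    (cs : CoxeterSystem M W) (T : Set B) : Subgroup W :=
  Subgroup.closure (cs.simple '' T)

/-- A subset `T` of generators is *spherical* if the parabolic subgroup `W_T` is finite. -/
def CoxeterSystem.IsSpherical {B W : Type*} [Group W] {M : CoxeterMatrix B}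
    (cs : CoxeterSystem M W) (T : Set B) : Prop :=
  (cs.parabolic T : Set W).Finite

/-- The support of `w`: the set of generators occurring in a reduced expression for `w`. -/
def CoxeterSystem.support {B W : Type*} [Group W] {M : CoxeterMatrix B}
    (cs : CoxeterSystem M W) (w : W) : Set B :=
  {i | ∃ ω : List B, cs.IsReduced ω ∧ cs.wordProd ω = w ∧ i ∈ ω}

namespace Stmt7Aux

/-- A lower bound for word length in the dihedral group with respect to
the generators `sr 0` and `sr 1`. -/
def dnu {n : ℕ} : DihedralGroup n → ℕ
  | .r j => min (2 * j.val) (2 * (-j).val)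
  | .sr j => min (2 * (j - 1).val + 1) (2 * (-j).val + 1)

lemma val_add_one {n : ℕ} [NeZero n] (hn : 2 ≤ n) (x : ZMod n) :
    (x + 1).val = x.val + 1 ∨ (x.val + 1 = n ∧ (x + 1).val = 0) := by
  have h := ZMod.val_add x 1
  rw [ZMod.val_one'' (by omega)] at h
  have hx := ZMod.val_lt x
  rcases Nat.lt_or_ge (x.val + 1) n with h' | h'
  · left; rw [h, Nat.mod_eq_of_lt h']
  · have hxn : x.val + 1 = n := by omega
    exact Or.inr ⟨hxn, by rw [h, hxn, Nat.mod_self]⟩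

lemma val_neg' {n : ℕ} [NeZero n] (x : ZMod n) :
    (x.val = 0 ∧ (-x).val = 0) ∨ (1 ≤ x.val ∧ (-x).val = n - x.val) := by
  rcases eq_or_ne x 0 with rfl | hx
  · left; simp
  · right
    have h1 : x.val ≠ 0 := by rwa [ne_eq, ZMod.val_eq_zero]
    rw [ZMod.neg_val, if_neg hx]
    omega

lemma dnu_sr_zero_mul {n : ℕ} [NeZero n] (hn : 2 ≤ n) (w : DihedralGroup n) :
    dnu (.sr 0 * w) ≤ dnu w + 1 := by
  rcases w with j | j
  · rw [DihedralGroup.sr_mul_r, zero_add]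
    simp only [dnu]
    have e : j - 1 + 1 = j := by ring
    have h1 := val_add_one hn (j - 1)
    rw [e] at h1
    have h2 := ZMod.val_lt (j - 1)
    have h3 := val_neg' j
    omega
  · rw [DihedralGroup.sr_mul_sr, sub_zero]
    simp only [dnu]
    have e : j - 1 + 1 = j := by ring
    have h1 := val_add_one hn (j - 1)
    rw [e] at h1
    have h3 := val_neg' j
    omega

lemma dnu_sr_one_mul {n : ℕ} [NeZero n] (hn : 2 ≤ n) (w : DihedralGroup n) :
    dnu (.sr 1 * w) ≤ dnu w + 1 := by
  rcases w with j | j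
  · rw [DihedralGroup.sr_mul_r]
    have e2 : (1 : ZMod n) + j = j + 1 := by ring
    rw [e2]
    simp only [dnu]
    have e1 : j + 1 - 1 = j := by ring
    rw [e1]
    have h1 := val_add_one hn j
    have h2 := val_neg' (j + 1)
    have h3 := val_neg' j
    have h4 := ZMod.val_lt j
    omega
  · rw [DihedralGroup.sr_mul_sr]
    simp only [dnu]
    have e1 : -(j - 1) = -j + 1 := by ring
    rw [e1]
    have h1 := val_add_one hn (-j)
    have h2 := val_neg' j
    have h3 := ZMod.val_lt (j - 1)
    omega

lemma dnu_one {n : ℕ} [NeZero n] : dnu (1 : DihedralGroup n) = 0 := by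
  rw [DihedralGroup.one_def]; simp [dnu]

lemma dnu_r_neg {n : ℕ} (j : ZMod n) :
    dnu (DihedralGroup.r (-j)) = dnu (DihedralGroup.r j) := by
  simp [dnu, Nat.min_comm]

lemma count_le {B W : Type*} [Group W] {M : CoxeterMatrix B} (cs : CoxeterSystem M W)
    {n : ℕ} [NeZero n] (hn : 2 ≤ n)
    (φ : W →* DihedralGroup n) (ψ : W →* Multiplicative (ZMod 2))
    (hh : ∀ i : B, ((φ (cs.simple i) = .sr 0 ∨ φ (cs.simple i) = .sr 1) ∧ ψ (cs.simple i) = 1)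
          ∨ φ (cs.simple i) = 1) :
    ∀ ω : List B,
      dnu (φ (cs.wordProd ω)) + (if ψ (cs.wordProd ω) = 1 then 0 else 1) ≤ ω.length := by
  intro ω
  induction ω with
  | nil => simp [CoxeterSystem.wordProd_nil, dnu_one]
  | cons i ω ih =>
    rw [cs.wordProd_cons, map_mul, map_mul, List.length_cons]
    rcases hh i with ⟨hφ, hψ⟩ | hφ
    · rw [hψ, one_mul]
      rcases hφ with h | h <;> rw [h]
      · have key := dnu_sr_zero_mul hn (φ (cs.wordProd ω))
        split_ifs at ih ⊢ <;> omega
      · have key := dnu_sr_one_mul hn (φ (cs.wordProd ω))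
        split_ifs at ih ⊢ <;> omega
    · rw [hφ, one_mul]
      split_ifs at ih ⊢ <;> omega

lemma bound {B W : Type*} [Group W] {M : CoxeterMatrix B} (cs : CoxeterSystem M W)
    {n : ℕ} [NeZero n] (hn : 2 ≤ n)
    (φ : W →* DihedralGroup n) (ψ : W →* Multiplicative (ZMod 2))
    (hh : ∀ i : B, ((φ (cs.simple i) = .sr 0 ∨ φ (cs.simple i) = .sr 1) ∧ ψ (cs.simple i) = 1)
          ∨ φ (cs.simple i) = 1) (w : W) :
    dnu (φ w) + (if ψ w = 1 then 0 else 1) ≤ cs.length w := by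
  obtain ⟨ω, hlen, hw⟩ := cs.exists_reduced_word w
  have h := count_le cs hn φ ψ hh ω
  rw [← hw, ← (show cs.length (cs.wordProd ω) = ω.length from hlen), ← hw] at h
  exact h

lemma pow_even_eq_one {G : Type*} [Monoid G] {x : G} (hx : x * x = 1) {m : ℕ} (hm : Even m) :
    x ^ m = 1 := by
  obtain ⟨c, hc⟩ := hm
  have h2 : m = 2 * c := by omega
  rw [h2, pow_mul, pow_two, hx, one_pow]

open scoped Classical in
/-- The map sending `s ↦ sr 0`, `t ↦ sr 1` and all other generators to `1`. -/
noncomputable def fgen {B : Type*} (n : ℕ) (s t : B) (i : B) : DihedralGroup n :=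
  if i = s then .sr 0 else if i = t then .sr 1 else 1

lemma fgen_s {B : Type*} (n : ℕ) (s t : B) : fgen n s t s = .sr 0 := by
  simp [fgen]

lemma fgen_t {B : Type*} (n : ℕ) {s t : B} (hst : s ≠ t) : fgen n s t t = .sr 1 := by
  simp [fgen, Ne.symm hst]

lemma fgen_other {B : Type*} (n : ℕ) {s t i : B} (his : i ≠ s) (hit : i ≠ t) :
    fgen n s t i = 1 := by
  simp [fgen, his, hit]

lemma fgen_mul_self {B : Type*} (n : ℕ) (s t i : B) : fgen n s t i * fgen n s t i = 1 := by
  unfold fgen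
  split_ifs <;> simp [DihedralGroup.sr_mul_self]

lemma fgen_liftable {B : Type*} (M : CoxeterMatrix B) (s t : B) (hst : s ≠ t)
    (heven : M.IsEven) : M.IsLiftable (fgen (M s t) s t) := by
  intro i i'
  rcases eq_or_ne i i' with rfl | hii
  · rw [M.diagonal, pow_one]; exact fgen_mul_self _ _ _ _
  · by_cases hist : i = s ∧ i' = t
    · obtain ⟨rfl, rfl⟩ := hist
      rw [fgen_s, fgen_t _ hst, DihedralGroup.sr_mul_sr, sub_zero]
      exact DihedralGroup.r_one_pow_n
    · by_cases hits : i = t ∧ i' = s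
      · obtain ⟨rfl, rfl⟩ := hits
        rw [fgen_t _ hst, fgen_s, DihedralGroup.sr_mul_sr, M.symmetric]
        have h0 : (0 : ZMod (M i i')) - 1 = -1 := by ring
        rw [h0]
        have h1 : (DihedralGroup.r (-1) : DihedralGroup (M i i')) = (DihedralGroup.r 1)⁻¹ := by
          apply eq_inv_of_mul_eq_one_left
          simp
        rw [h1, inv_pow, DihedralGroup.r_one_pow_n, inv_one]
      · push_neg at hist hits
        have hone : fgen (M s t) s t i = 1 ∨ fgen (M s t) s t i' = 1 := by
          by_cases his : i = s
          · subst his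
            exact Or.inr (fgen_other _ (Ne.symm hii) (hist rfl))
          · by_cases hit : i = t
            · subst hit
              exact Or.inr (fgen_other _ (hits rfl) (Ne.symm hii))
            · exact Or.inl (fgen_other _ his hit)
        have hx : (fgen (M s t) s t i * fgen (M s t) s t i') *
            (fgen (M s t) s t i * fgen (M s t) s t i') = 1 := by
          rcases hone with h | h
          · rw [h, one_mul]; exact fgen_mul_self _ _ _ _
          · rw [h, mul_one]; exact fgen_mul_self _ _ _ _
        exact pow_even_eq_one hx (heven i i' hii)

open scoped Classical in
/-- The map sending `r ↦ ofAdd 1` and all other generators to `1`. -/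
noncomputable def ggen {B : Type*} (r : B) (i : B) : Multiplicative (ZMod 2) :=
  if i = r then Multiplicative.ofAdd 1 else 1

lemma ggen_r {B : Type*} (r : B) : ggen r r = Multiplicative.ofAdd 1 := by
  simp [ggen]

lemma ggen_other {B : Type*} {r i : B} (h : i ≠ r) : ggen r i = 1 := by
  simp [ggen, h]

lemma ggen_liftable {B : Type*} (M : CoxeterMatrix B) (heven : M.IsEven) (r : B) :
    M.IsLiftable (ggen r) := by
  have hsq : ∀ x : Multiplicative (ZMod 2), x * x = 1 := by decide
  intro i i'
  rcases eq_or_ne i i' with rfl | hii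
  · rw [M.diagonal, pow_one]; exact hsq _
  · exact pow_even_eq_one (hsq _) (heven i i' hii)

end Stmt7Aux

open Stmt7Aux in
theorem stmt_7 {B W : Type*} [Group W] {M : CoxeterMatrix B} (cs : CoxeterSystem M W)
    (heven : M.IsEven) (t s : B) (h2 : 2 < M s t) (hfin : M s t ≠ 0)
    (hS' : ∀ a a' : B, a ≠ a' → M a t ≠ 0 → M a' t ≠ 0 →
      2 < M a t → 2 < M a' t → M a a' = 0)
    (k : ℕ) (hk1 : 1 ≤ k) (hk : 2 * k + 1 < M s t) :
    ∀ r ∈ ({a | M a t ≠ 0} \ {t} : Set B),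
      cs.length (cs.wordProd (alternatingWord s t (2 * k + 1))) <
        cs.length (cs.simple r * cs.wordProd (alternatingWord s t (2 * k + 1))) ∧
      cs.length (cs.wordProd (alternatingWord s t (2 * k + 1))) <
        cs.length (cs.wordProd (alternatingWord s t (2 * k + 1)) * cs.simple r) := by
  classical
  intro r hr
  obtain ⟨-, hr2⟩ := hr
  have hrt : r ≠ t := by simpa using hr2
  haveI : NeZero (M s t) := ⟨hfin⟩
  have hn2 : 2 ≤ M s t := by omega
  have hst : s ≠ t := by
    intro h; rw [h, M.diagonal] at h2; omega
  have hf := fgen_liftable M s t hst heven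
  set φ := cs.lift ⟨fgen (M s t) s t, hf⟩ with hφdef
  have hφs : φ (cs.simple s) = DihedralGroup.sr 0 := by
    rw [hφdef, cs.lift_apply_simple, fgen_s]
  have hφt : φ (cs.simple t) = DihedralGroup.sr 1 := by
    rw [hφdef, cs.lift_apply_simple, fgen_t _ hst]
  have hφo : ∀ i, i ≠ s → i ≠ t → φ (cs.simple i) = 1 := fun i hi1 hi2 => by
    rw [hφdef, cs.lift_apply_simple, fgen_other _ hi1 hi2]
  have hodd : ¬ Even (2 * k + 1) := by rw [Nat.even_iff]; omega
  have hdiv : (2 * k + 1) / 2 = k := by omega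
  have hu : φ (cs.wordProd (alternatingWord s t (2 * k + 1))) =
      DihedralGroup.sr (1 + (k : ZMod (M s t))) := by
    rw [cs.prod_alternatingWord_eq_mul_pow, if_neg hodd, hdiv, map_mul, map_pow, map_mul,
      hφs, hφt, DihedralGroup.sr_mul_sr, sub_zero, DihedralGroup.r_one_pow,
      DihedralGroup.sr_mul_r]
  have hvk1 : ((1 : ZMod (M s t)) + (k : ZMod (M s t))).val = 1 + k := by
    have e : (1 : ZMod (M s t)) + (k : ZMod (M s t)) = ((1 + k : ℕ) : ZMod (M s t)) := by
      push_cast; ring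
    rw [e, ZMod.val_cast_of_lt (by omega)]
  have hvk : ((k : ZMod (M s t))).val = k := ZMod.val_cast_of_lt (by omega)
  have hd1 : 2 * k + 2 ≤ dnu (DihedralGroup.r ((1 : ZMod (M s t)) + (k : ZMod (M s t)))) := by
    simp only [dnu]
    have h := val_neg' ((1 : ZMod (M s t)) + (k : ZMod (M s t)))
    omega
  have hd1' : 2 * k + 2 ≤ dnu (DihedralGroup.r (-((1 : ZMod (M s t)) + (k : ZMod (M s t))))) := by
    rw [dnu_r_neg]; exact hd1
  have hd2 : 2 * k + 1 ≤ dnu (DihedralGroup.sr ((1 : ZMod (M s t)) + (k : ZMod (M s t)))) := by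
    simp only [dnu]
    have e : (1 : ZMod (M s t)) + (k : ZMod (M s t)) - 1 = (k : ZMod (M s t)) := by ring
    rw [e, hvk]
    have h := val_neg' ((1 : ZMod (M s t)) + (k : ZMod (M s t)))
    omega
  have hule : cs.length (cs.wordProd (alternatingWord s t (2 * k + 1))) ≤ 2 * k + 1 := by
    have h := cs.length_wordProd_le (alternatingWord s t (2 * k + 1))
    rwa [length_alternatingWord] at h
  rcases eq_or_ne r s with rfl | hrs
  · -- the case r = s
    have hh : ∀ i : B, ((φ (cs.simple i) = .sr 0 ∨ φ (cs.simple i) = .sr 1) ∧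
        (1 : W →* Multiplicative (ZMod 2)) (cs.simple i) = 1) ∨ φ (cs.simple i) = 1 := by
      intro i
      by_cases h1 : i = r
      · subst h1; exact Or.inl ⟨Or.inl hφs, rfl⟩
      · by_cases h2' : i = t
        · subst h2'; exact Or.inl ⟨Or.inr hφt, rfl⟩
        · exact Or.inr (hφo i h1 h2')
    constructor
    · have hb := bound cs hn2 φ 1 hh
        (cs.simple r * cs.wordProd (alternatingWord r t (2 * k + 1)))
      rw [map_mul, hφs, hu, DihedralGroup.sr_mul_sr, sub_zero] at hb
      split_ifs at hb <;> omega
    · have hb := bound cs hn2 φ 1 hh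
        (cs.wordProd (alternatingWord r t (2 * k + 1)) * cs.simple r)
      rw [map_mul, hφs, hu, DihedralGroup.sr_mul_sr] at hb
      have e : (0 : ZMod (M r t)) - ((1 : ZMod (M r t)) + (k : ZMod (M r t))) = -((1 : ZMod (M r t)) + (k : ZMod (M r t))) := by ring
      rw [e] at hb
      split_ifs at hb <;> omega
  · -- the case r ∉ {s, t}
    have hg := ggen_liftable M heven r
    set ψ := cs.lift ⟨ggen r, hg⟩ with hψdef
    have hψr : ψ (cs.simple r) = Multiplicative.ofAdd 1 := by
      rw [hψdef, cs.lift_apply_simple, ggen_r]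
    have hψo : ∀ i, i ≠ r → ψ (cs.simple i) = 1 := fun i hi => by
      rw [hψdef, cs.lift_apply_simple, ggen_other hi]
    have hh : ∀ i : B, ((φ (cs.simple i) = .sr 0 ∨ φ (cs.simple i) = .sr 1) ∧
        ψ (cs.simple i) = 1) ∨ φ (cs.simple i) = 1 := by
      intro i
      by_cases h1 : i = s
      · subst h1; exact Or.inl ⟨Or.inl hφs, hψo _ (Ne.symm hrs)⟩
      · by_cases h2' : i = t
        · subst h2'; exact Or.inl ⟨Or.inr hφt, hψo _ (Ne.symm hrt)⟩
        · exact Or.inr (hφo i h1 h2')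
    have hψu : ψ (cs.wordProd (alternatingWord s t (2 * k + 1))) = 1 := by
      rw [cs.prod_alternatingWord_eq_mul_pow, if_neg hodd, map_mul, map_pow, map_mul,
        hψo t (Ne.symm hrt), hψo s (Ne.symm hrs)]
      simp
    have hne : (Multiplicative.ofAdd (1 : ZMod 2)) ≠ 1 := by decide
    constructor
    · have hb := bound cs hn2 φ ψ hh
        (cs.simple r * cs.wordProd (alternatingWord s t (2 * k + 1)))
      rw [map_mul, map_mul, hφo r hrs hrt, one_mul, hu, hψr, hψu, mul_one, if_neg hne] at hb
      omega
    · have hb := bound cs hn2 φ ψ hh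
        (cs.wordProd (alternatingWord s t (2 * k + 1)) * cs.simple r)
      rw [map_mul, map_mul, hφo r hrs hrt, mul_one, hu, hψr, hψu, one_mul, if_neg hne] at hb
      omega
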